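/- For the normalized four-qubit state |ψ₂⟩ = (|0000⟩ + |1011⟩ + |1101⟩ + |1110⟩)/2, the reduced density matrices satisfy tr(ρ₁²) = 5/8, tr(ρ₂²) = tr(ρ₃²) = tr(ρ₄²) = 1/2, and tr(ρ₁₂²) = tr(ρ₁₃²) = tr(ρ₁₄²) = 3/8; equivalently, the concurrences are C₁ = √3/2, C₂ = C₃ = C₄ = 1, and C₁₂ = C₁₃ = C₁₄ = √5/2. -/
import Mathlib


open scoped BigOperators

noncomputable section

/-- A four-qubit pure state amplitude function on the computational basis. -/
abbrev QState := Fin 2 → Fin 2 → Fin 2 → Fin 2 → ℂ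

/-- Reduced density matrix of qubit 1. -/
def rho1 (ψ : QState) (a b : Fin 2) : ℂ := ∑ i, ∑ j, ∑ k, ψ a i j k * star (ψ b i j k)
/-- Reduced density matrix of qubit 2. -/
def rho2 (ψ : QState) (a b : Fin 2) : ℂ := ∑ i, ∑ j, ∑ k, ψ i a j k * star (ψ i b j k)
/-- Reduced density matrix of qubit 3. -/
def rho3 (ψ : QState) (a b : Fin 2) : ℂ := ∑ i, ∑ j, ∑ k, ψ i j a k * star (ψ i j b k)
/-- Reduced density matrix of qubit 4. -/
def rho4 (ψ : QState) (a b : Fin 2) : ℂ := ∑ i, ∑ j, ∑ k, ψ i j k a * star (ψ i j k b)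

/-- tr(ρ²) for a one-qubit density matrix. -/
def purity1 (ρ : Fin 2 → Fin 2 → ℂ) : ℂ := ∑ a, ∑ b, ρ a b * ρ b a

/-- Reduced density matrix of qubits 1,2. -/
def rho12 (ψ : QState) (a b : Fin 2 × Fin 2) : ℂ :=
  ∑ i, ∑ j, ψ a.1 a.2 i j * star (ψ b.1 b.2 i j)
/-- Reduced density matrix of qubits 1,3. -/
def rho13 (ψ : QState) (a b : Fin 2 × Fin 2) : ℂ :=
  ∑ i, ∑ j, ψ a.1 i a.2 j * star (ψ b.1 i b.2 j)
/-- Reduced density matrix of qubits 1,4. -/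
def rho14 (ψ : QState) (a b : Fin 2 × Fin 2) : ℂ :=
  ∑ i, ∑ j, ψ a.1 i j a.2 * star (ψ b.1 i j b.2)

/-- tr(ρ²) for a two-qubit density matrix. -/
def purity2 (ρ : Fin 2 × Fin 2 → Fin 2 × Fin 2 → ℂ) : ℂ := ∑ a, ∑ b, ρ a b * ρ b a

/-- |ψ₂⟩ = (|0000⟩ + |1011⟩ + |1101⟩ + |1110⟩)/2 -/
def psi2 : QState := fun a b c d =>
  if (a, b, c, d) = (0, 0, 0, 0) ∨ (a, b, c, d) = (1, 0, 1, 1) ∨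
     (a, b, c, d) = (1, 1, 0, 1) ∨ (a, b, c, d) = (1, 1, 1, 0)
  then (1 / 2 : ℂ) else 0

theorem stmt1 :
    purity1 (rho1 psi2) = 5 / 8 ∧
    purity1 (rho2 psi2) = 1 / 2 ∧ purity1 (rho3 psi2) = 1 / 2 ∧ purity1 (rho4 psi2) = 1 / 2 ∧
    purity2 (rho12 psi2) = 3 / 8 ∧ purity2 (rho13 psi2) = 3 / 8 ∧ purity2 (rho14 psi2) = 3 / 8 ∧
    Real.sqrt (2 * (1 - (purity1 (rho1 psi2)).re)) = Real.sqrt 3 / 2 ∧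
    Real.sqrt (2 * (1 - (purity1 (rho2 psi2)).re)) = 1 ∧
    Real.sqrt (2 * (1 - (purity1 (rho3 psi2)).re)) = 1 ∧
    Real.sqrt (2 * (1 - (purity1 (rho4 psi2)).re)) = 1 ∧
    Real.sqrt (2 * (1 - (purity2 (rho12 psi2)).re)) = Real.sqrt 5 / 2 ∧
    Real.sqrt (2 * (1 - (purity2 (rho13 psi2)).re)) = Real.sqrt 5 / 2 ∧
    Real.sqrt (2 * (1 - (purity2 (rho14 psi2)).re)) = Real.sqrt 5 / 2 := by
  have h1 : purity1 (rho1 psi2) = 5 / 8 := by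
    simp only [Prod.mk.injEq, show ((0:Fin 2) = 1) = False by decide, show ((1:Fin 2) = 0) = False by decide, purity1, rho1, psi2, Fin.sum_univ_succ, Fin.sum_univ_zero]
    norm_num [Prod.mk.injEq]
  have h2 : purity1 (rho2 psi2) = 1 / 2 := by
    simp only [Prod.mk.injEq, show ((0:Fin 2) = 1) = False by decide, show ((1:Fin 2) = 0) = False by decide, purity1, rho2, psi2, Fin.sum_univ_succ, Fin.sum_univ_zero]
    norm_num [Prod.mk.injEq]
  have h3 : purity1 (rho3 psi2) = 1 / 2 := by
    simp only [Prod.mk.injEq, show ((0:Fin 2) = 1) = False by decide, show ((1:Fin 2) = 0) = False by decide, purity1, rho3, psi2, Fin.sum_univ_succ, Fin.sum_univ_zero]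
    norm_num [Prod.mk.injEq]
  have h4 : purity1 (rho4 psi2) = 1 / 2 := by
    simp only [Prod.mk.injEq, show ((0:Fin 2) = 1) = False by decide, show ((1:Fin 2) = 0) = False by decide, purity1, rho4, psi2, Fin.sum_univ_succ, Fin.sum_univ_zero]
    norm_num [Prod.mk.injEq]
  have h5 : purity2 (rho12 psi2) = 3 / 8 := by
    simp only [Prod.mk.injEq, show ((0:Fin 2) = 1) = False by decide, show ((1:Fin 2) = 0) = False by decide, purity2, rho12, psi2, Fintype.sum_prod_type, Fin.sum_univ_succ,
      Fin.sum_univ_zero]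
    norm_num [Prod.mk.injEq]
  have h6 : purity2 (rho13 psi2) = 3 / 8 := by
    simp only [Prod.mk.injEq, show ((0:Fin 2) = 1) = False by decide, show ((1:Fin 2) = 0) = False by decide, purity2, rho13, psi2, Fintype.sum_prod_type, Fin.sum_univ_succ,
      Fin.sum_univ_zero]
    norm_num [Prod.mk.injEq]
  have h7 : purity2 (rho14 psi2) = 3 / 8 := by
    simp only [Prod.mk.injEq, show ((0:Fin 2) = 1) = False by decide, show ((1:Fin 2) = 0) = False by decide, purity2, rho14, psi2, Fintype.sum_prod_type, Fin.sum_univ_succ,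
      Fin.sum_univ_zero]
    norm_num [Prod.mk.injEq]
  have s4 : Real.sqrt 4 = 2 := by
    rw [show (4:ℝ) = 2 ^ 2 by norm_num, Real.sqrt_sq (by norm_num)]
  have hs3 : Real.sqrt (3 / 4) = Real.sqrt 3 / 2 := by
    rw [Real.sqrt_div (by norm_num : (0:ℝ) ≤ 3), s4]
  have hs5 : Real.sqrt (5 / 4) = Real.sqrt 5 / 2 := by
    rw [Real.sqrt_div (by norm_num : (0:ℝ) ≤ 5), s4]
  have r1 : (purity1 (rho1 psi2)).re = 5/8 := by rw [h1]; norm_num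
  have r2 : (purity1 (rho2 psi2)).re = 1/2 := by rw [h2]; norm_num
  have r3 : (purity1 (rho3 psi2)).re = 1/2 := by rw [h3]; norm_num
  have r4 : (purity1 (rho4 psi2)).re = 1/2 := by rw [h4]; norm_num
  have r5 : (purity2 (rho12 psi2)).re = 3/8 := by rw [h5]; norm_num
  have r6 : (purity2 (rho13 psi2)).re = 3/8 := by rw [h6]; norm_num
  have r7 : (purity2 (rho14 psi2)).re = 3/8 := by rw [h7]; norm_num
  refine ⟨h1, h2, h3, h4, h5, h6, h7, ?_, ?_, ?_, ?_, ?_, ?_, ?_⟩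
  · rw [r1, show (2:ℝ) * (1 - 5/8) = 3/4 by norm_num]; exact hs3
  · rw [r2, show (2:ℝ) * (1 - 1/2) = 1 by norm_num]; exact Real.sqrt_one
  · rw [r3, show (2:ℝ) * (1 - 1/2) = 1 by norm_num]; exact Real.sqrt_one
  · rw [r4, show (2:ℝ) * (1 - 1/2) = 1 by norm_num]; exact Real.sqrt_one
  · rw [r5, show (2:ℝ) * (1 - 3/8) = 5/4 by norm_num]; exact hs5
  · rw [r6, show (2:ℝ) * (1 - 3/8) = 5/4 by norm_num]; exact hs5
  · rw [r7, show (2:ℝ) * (1 - 3/8) = 5/4 by norm_num]; exact hs5
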